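/- Theorem 4.8 (iii): For each A > 0 the set { a·1_{[u,T]} : |a| ≤ A, u ∈ [0,T] } is relatively mJ1-compact in D([0,T]), i.e. its closure in (D([0,T]), d) is compact. -/

import Mathlib

open MeasureTheory Filter Set Topology

noncomputable section

/-- `x` is càdlàg on `[0,T]`: right-continuous at every `t ∈ [0,T)` and
admitting a left limit at every `t ∈ (0,T]`. -/
def Cadlag (T : ℝ) (x : ℝ → ℝ) : Prop :=
  (∀ t ∈ Set.Ico (0:ℝ) T, Filter.Tendsto x (nhdsWithin t (Set.Ioi t)) (nhds (x t))) ∧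
  (∀ t ∈ Set.Ioc (0:ℝ) T, ∃ L : ℝ, Filter.Tendsto x (nhdsWithin t (Set.Iio t)) (nhds L))

/-- membership in `𝕍`: càdlàg of finite total variation on `[0,T]`. -/
def MemV (T : ℝ) (v : ℝ → ℝ) : Prop :=
  Cadlag T v ∧ BoundedVariationOn v (Set.Icc 0 T)

/-- `μ` is the finite signed (Lebesgue–Stieltjes) measure induced by `v` on `[0,T]`:
`μ([0,t]) = v(t)` for `t ∈ [0,T]`, and `μ` vanishes outside `[0,T]`. -/
def Represents (T : ℝ) (μ : MeasureTheory.SignedMeasure ℝ) (v : ℝ → ℝ) : Prop :=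
  (∀ t ∈ Set.Icc (0:ℝ) T, μ (Set.Icc 0 t) = v t) ∧
  (∀ s : Set ℝ, MeasurableSet s → s ∩ Set.Icc (0:ℝ) T = ∅ → μ s = 0)

/-- Integral of `f` against a signed measure. -/
noncomputable def sInt (μ : MeasureTheory.SignedMeasure ℝ) (f : ℝ → ℝ) : ℝ :=
  (∫ t, f t ∂μ.toJordanDecomposition.posPart) - (∫ t, f t ∂μ.toJordanDecomposition.negPart)

/-- `∫_{[0,T]} f dv` : integral of `f` with respect to the Lebesgue–Stieltjes
signed measure induced by `v` on `[0,T]`. -/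
noncomputable def intD (T : ℝ) (f v : ℝ → ℝ) : ℝ :=
  letI := Classical.propDecidable (∃ μ : MeasureTheory.SignedMeasure ℝ, Represents T μ v)
  if h : ∃ μ : MeasureTheory.SignedMeasure ℝ, Represents T μ v then sInt h.choose f else 0

/-- S-convergence `x_n →_S x₀` on `D([0,T])`. -/
def SConv (T : ℝ) (x : ℕ → ℝ → ℝ) (x₀ : ℝ → ℝ) : Prop :=
  ∀ ε > (0:ℝ), ∃ v : ℕ → ℝ → ℝ, ∃ v₀ : ℝ → ℝ,
    (∀ n, MemV T (v n)) ∧ MemV T v₀ ∧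
    (∀ n, ∀ t ∈ Set.Icc (0:ℝ) T, |x n t - v n t| ≤ ε) ∧
    (∀ t ∈ Set.Icc (0:ℝ) T, |x₀ t - v₀ t| ≤ ε) ∧
    (∀ f : ℝ → ℝ, Continuous f →
      Filter.Tendsto (fun n => intD T f (v n)) Filter.atTop (nhds (intD T f v₀)))

/-- `x_n ⇒*_S x₀` : every subsequence contains a further subsequence `→_S`-converging to `x₀`. -/
def SStarConv (T : ℝ) (x : ℕ → ℝ → ℝ) (x₀ : ℝ → ℝ) : Prop :=
  ∀ φ : ℕ → ℕ, StrictMono φ →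
    ∃ ψ : ℕ → ℕ, StrictMono ψ ∧ SConv T (fun k => x (φ (ψ k))) x₀

/-- membership in `𝔸([0,T])`: continuous, of finite variation, vanishing at `0`. -/
def MemA (T : ℝ) (A : ℝ → ℝ) : Prop :=
  ContinuousOn A (Set.Icc 0 T) ∧ BoundedVariationOn A (Set.Icc 0 T) ∧ A 0 = 0

/-- `A_n →_τ A₀` : uniform convergence on `[0,T]` together with uniformly bounded
total variations. -/
def TauConv (T : ℝ) (A : ℕ → ℝ → ℝ) (A₀ : ℝ → ℝ) : Prop :=
  TendstoUniformlyOn (fun n => A n) A₀ Filter.atTop (Set.Icc 0 T) ∧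
  ∃ M : ℝ, ∀ n, eVariationOn (A n) (Set.Icc 0 T) ≤ ENNReal.ofReal M

/-- `x` has (at least) `k` up-crossings of the levels `a < b` on `[0,T]`. -/
def HasUpcrossings (T a b : ℝ) (x : ℝ → ℝ) (k : ℕ) : Prop :=
  ∃ s u : Fin k → ℝ, (∀ i, 0 ≤ s i ∧ s i < u i ∧ u i ≤ T) ∧
    (∀ i j : Fin k, i < j → u i < s j) ∧
    (∀ i, x (s i) < a ∧ b < x (u i))

/-- `x` has (at least) `k` `η`-oscillations on `[0,T]`. -/
def HasOscillations (T η : ℝ) (x : ℝ → ℝ) (k : ℕ) : Prop :=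
  ∃ s u : Fin k → ℝ, (∀ i, 0 ≤ s i ∧ s i < u i ∧ u i ≤ T) ∧
    (∀ i j : Fin k, i < j → u i ≤ s j) ∧
    (∀ i, |x (u i) - x (s i)| > η)


/-- extension of `x ∈ D([0,T])` to a function which is `0` before `0` and
constantly `x T` after `T`. -/
def extFn (T : ℝ) (x : ℝ → ℝ) : ℝ → ℝ := fun t =>
  if t < 0 then 0 else if t < T then x t else x T

/-- `l` is an admissible time change of `[a,b]`: a strictly increasing continuous
bijection of `[a,b]` onto itself. -/
def TimeChange (a b : ℝ) (l : ℝ → ℝ) : Prop :=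
  ContinuousOn l (Set.Icc a b) ∧ StrictMonoOn l (Set.Icc a b) ∧
    l a = a ∧ l b = b ∧ Set.MapsTo l (Set.Icc a b) (Set.Icc a b)

/-- Billingsley's complete metric for the `J₁` topology on `D([a,b])`:
`d_Sk(x,y)` is the infimum, over time changes `l` of `[a,b]`, of the maximum of
`sup_{s<t} |log((l t - l s)/(t - s))|` and `sup_t |x t - y (l t)|`. -/
noncomputable def dSk (a b : ℝ) (x y : ℝ → ℝ) : ℝ :=
  sInf {r : ℝ | 0 ≤ r ∧ ∃ l : ℝ → ℝ, TimeChange a b l ∧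
    (∀ s ∈ Set.Icc a b, ∀ t ∈ Set.Icc a b, s < t →
      |Real.log ((l t - l s) / (t - s))| ≤ r) ∧
    (∀ t ∈ Set.Icc a b, |x t - y (l t)| ≤ r)}

/-- the metric of the `mJ₁` topology on `D([0,T])` (with parameter `ε > 0`). -/
noncomputable def dmJ (T ε : ℝ) (x y : ℝ → ℝ) : ℝ :=
  dSk (-ε) (T + ε) (extFn T x) (extFn T y)

lemma extFn_indicator (T a u : ℝ) (hu0 : 0 ≤ u) (huT : u ≤ T) (t : ℝ) :
    extFn T ((Set.Icc u T).indicator (fun _ => a)) t = if u ≤ t then a else 0 := by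
  unfold extFn
  by_cases h1 : t < 0
  · rw [if_pos h1, if_neg (by linarith : ¬ u ≤ t)]
  · rw [if_neg h1]
    by_cases h2 : t < T
    · rw [if_pos h2]
      by_cases h3 : u ≤ t
      · rw [if_pos h3, Set.indicator_of_mem (Set.mem_Icc.mpr ⟨h3, le_of_lt h2⟩)]
      · rw [if_neg h3, Set.indicator_of_notMem (fun hm => h3 hm.1)]
    · rw [if_neg h2, if_pos (by linarith : u ≤ t),
        Set.indicator_of_mem (Set.mem_Icc.mpr ⟨huT, le_refl T⟩)]

lemma dmJ_nonneg (T ε : ℝ) (x y : ℝ → ℝ) : 0 ≤ dmJ T ε x y := by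
  apply Real.sInf_nonneg
  intro r hr
  exact hr.1

lemma cadlag_jump (T a u : ℝ) (hu0 : 0 ≤ u) (huT : u ≤ T) :
    Cadlag T ((Set.Icc u T).indicator fun _ => a) := by
  constructor
  · intro t ht
    by_cases h : u ≤ t
    · have heq : ∀ᶠ s in nhdsWithin t (Set.Ioi t),
          ((Set.Icc u T).indicator (fun _ => a)) s = a := by
        filter_upwards [Ioo_mem_nhdsGT_of_mem (show t ∈ Set.Ico t T from ⟨le_refl t, ht.2⟩)] with s hs
        exact Set.indicator_of_mem (Set.mem_Icc.mpr ⟨le_trans h (le_of_lt hs.1), le_of_lt hs.2⟩) _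
      rw [Set.indicator_of_mem (Set.mem_Icc.mpr ⟨h, le_of_lt ht.2⟩)]
      exact Filter.Tendsto.congr' (Filter.EventuallyEq.symm heq) tendsto_const_nhds
    · push_neg at h
      have heq : ∀ᶠ s in nhdsWithin t (Set.Ioi t),
          ((Set.Icc u T).indicator (fun _ => a)) s = 0 := by
        filter_upwards [Ioo_mem_nhdsGT_of_mem (show t ∈ Set.Ico t u from ⟨le_refl t, h⟩)] with s hs
        exact Set.indicator_of_notMem (fun hm => absurd hm.1 (not_le.mpr hs.2)) _
      rw [Set.indicator_of_notMem (fun hm => absurd hm.1 (not_le.mpr h))]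
      exact Filter.Tendsto.congr' (Filter.EventuallyEq.symm heq) tendsto_const_nhds
  · intro t ht
    by_cases h : u < t
    · refine ⟨a, ?_⟩
      have heq : ∀ᶠ s in nhdsWithin t (Set.Iio t),
          ((Set.Icc u T).indicator (fun _ => a)) s = a := by
        filter_upwards [Ioo_mem_nhdsLT_of_mem (show t ∈ Set.Ioc u t from ⟨h, le_refl t⟩)] with s hs
        exact Set.indicator_of_mem (Set.mem_Icc.mpr ⟨le_of_lt hs.1, le_trans (le_of_lt hs.2) ht.2⟩) _
      exact Filter.Tendsto.congr' (Filter.EventuallyEq.symm heq) tendsto_const_nhds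
    · push_neg at h
      refine ⟨0, ?_⟩
      have heq : ∀ᶠ s in nhdsWithin t (Set.Iio t),
          ((Set.Icc u T).indicator (fun _ => a)) s = 0 := by
        filter_upwards [self_mem_nhdsWithin] with s hs
        exact Set.indicator_of_notMem
          (fun hm => absurd hm.1 (not_le.mpr (lt_of_lt_of_le hs h))) _
      exact Filter.Tendsto.congr' (Filter.EventuallyEq.symm heq) tendsto_const_nhds

lemma dmJ_jump_le (T ε a a' u u' : ℝ) (hT : 0 < T) (hε : 0 < ε)
    (hu : u ∈ Set.Icc (0:ℝ) T) (hu' : u' ∈ Set.Icc (0:ℝ) T) :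
    dmJ T ε ((Set.Icc u T).indicator fun _ => a) ((Set.Icc u' T).indicator fun _ => a')
      ≤ max (max |Real.log ((u' + ε) / (u + ε))| |Real.log ((T + ε - u') / (T + ε - u))|)
          |a - a'| := by
  obtain ⟨hu0, huT⟩ := hu
  obtain ⟨hu'0, hu'T⟩ := hu'
  set c1 : ℝ := (u' + ε) / (u + ε) with hc1def
  set c2 : ℝ := (T + ε - u') / (T + ε - u) with hc2def
  set r : ℝ := max (max |Real.log c1| |Real.log c2|) |a - a'| with hrdef
  have hden1 : (0:ℝ) < u + ε := by linarith
  have hden2 : (0:ℝ) < T + ε - u := by linarith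
  have hc1 : 0 < c1 := div_pos (by linarith) hden1
  have hc2 : 0 < c2 := div_pos (by linarith) hden2
  set l : ℝ → ℝ := fun t => if t ≤ u then u' + c1 * (t - u) else u' + c2 * (t - u)
    with hldef
  have hlu : l u = u' := by simp [hldef]
  have hla : l (-ε) = -ε := by
    have hle : -ε ≤ u := by linarith
    have : c1 * (-ε - u) = -(u' + ε) := by
      rw [hc1def]; field_simp; ring
    simp only [hldef, if_pos hle, this]; ring
  have hlb : l (T + ε) = T + ε := by
    have hle : ¬ (T + ε ≤ u) := by linarith
    have : c2 * (T + ε - u) = T + ε - u' := by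
      rw [hc2def]; field_simp
    simp only [hldef, if_neg hle, this]; ring
  have hmono : StrictMono l := by
    intro s t hst
    simp only [hldef]
    by_cases ht : t ≤ u
    · rw [if_pos (le_trans (le_of_lt hst) ht), if_pos ht]
      nlinarith
    · by_cases hs : s ≤ u
      · rw [if_pos hs, if_neg ht]
        push_neg at ht
        nlinarith
      · rw [if_neg hs, if_neg ht]
        push_neg at hs
        nlinarith
  have hslope : ∀ s t : ℝ, s < t →
      min c1 c2 * (t - s) ≤ l t - l s ∧ l t - l s ≤ max c1 c2 * (t - s) := by
    intro s t hst
    have hm1 : min c1 c2 ≤ c1 := min_le_left _ _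
    have hm2 : min c1 c2 ≤ c2 := min_le_right _ _
    have hM1 : c1 ≤ max c1 c2 := le_max_left _ _
    have hM2 : c2 ≤ max c1 c2 := le_max_right _ _
    simp only [hldef]
    by_cases ht : t ≤ u
    · rw [if_pos (le_trans (le_of_lt hst) ht), if_pos ht]
      constructor <;> nlinarith
    · by_cases hs : s ≤ u
      · rw [if_pos hs, if_neg ht]
        push_neg at ht
        constructor <;> nlinarith
      · rw [if_neg hs, if_neg ht]
        push_neg at hs
        constructor <;> nlinarith
  have hr0 : 0 ≤ r := le_trans (abs_nonneg _)
    (le_trans (le_max_left _ _) (le_max_left _ _))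
  have hmem : r ∈ {ρ : ℝ | 0 ≤ ρ ∧ ∃ l : ℝ → ℝ, TimeChange (-ε) (T + ε) l ∧
      (∀ s ∈ Set.Icc (-ε) (T + ε), ∀ t ∈ Set.Icc (-ε) (T + ε), s < t →
        |Real.log ((l t - l s) / (t - s))| ≤ ρ) ∧
      (∀ t ∈ Set.Icc (-ε) (T + ε),
        |extFn T ((Set.Icc u T).indicator fun _ => a) t
          - extFn T ((Set.Icc u' T).indicator fun _ => a') (l t)| ≤ ρ)} := by
    refine ⟨hr0, l, ⟨?_, hmono.strictMonoOn _, hla, hlb, ?_⟩, ?_, ?_⟩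
    · -- continuity
      have hcont : Continuous l := by
        rw [hldef]
        exact Continuous.if_le
          (continuous_const.add (continuous_const.mul (continuous_id.sub continuous_const)))
          (continuous_const.add (continuous_const.mul (continuous_id.sub continuous_const)))
          continuous_id continuous_const (fun x hx => by rw [hx]; ring)
      exact hcont.continuousOn
    · -- maps to
      intro t ht
      refine Set.mem_Icc.mpr ⟨?_, ?_⟩
      · rw [← hla]; exact hmono.monotone ht.1
      · rw [← hlb]; exact hmono.monotone ht.2
    · -- slope bound
      intro s _ t _ hst
      obtain ⟨hq1, hq2⟩ := hslope s t hst
      have hts : (0:ℝ) < t - s := by linarith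
      have hminpos : 0 < min c1 c2 := lt_min hc1 hc2
      have hqlo : min c1 c2 ≤ (l t - l s) / (t - s) := (le_div_iff₀ hts).mpr hq1
      have hqhi : (l t - l s) / (t - s) ≤ max c1 c2 := (div_le_iff₀ hts).mpr hq2
      have hqpos : 0 < (l t - l s) / (t - s) := lt_of_lt_of_le hminpos hqlo
      have hM : max |Real.log c1| |Real.log c2| ≤ r := le_max_left _ _
      refine le_trans (abs_le.mpr ⟨?_, ?_⟩) hM
      · -- lower
        have h1 : Real.log (min c1 c2) ≤ Real.log ((l t - l s) / (t - s)) :=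
          Real.log_le_log hminpos hqlo
        have h2 : -(max |Real.log c1| |Real.log c2|) ≤ Real.log (min c1 c2) := by
          rcases le_total c1 c2 with h | h
          · rw [min_eq_left h]
            exact le_trans (neg_le_neg (le_trans (le_max_left _ _) (le_refl _)))
              (neg_abs_le _)
          · rw [min_eq_right h]
            exact le_trans (neg_le_neg (le_max_right _ _)) (neg_abs_le _)
        linarith
      · -- upper
        have h1 : Real.log ((l t - l s) / (t - s)) ≤ Real.log (max c1 c2) :=
          Real.log_le_log hqpos hqhi
        have h2 : Real.log (max c1 c2) ≤ max |Real.log c1| |Real.log c2| := by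
          rcases le_total c1 c2 with h | h
          · rw [max_eq_right h]
            exact le_trans (le_abs_self _) (le_max_right _ _)
          · rw [max_eq_left h]
            exact le_trans (le_abs_self _) (le_max_left _ _)
        linarith
    · -- value bound
      intro t _
      rw [extFn_indicator T a u hu0 huT t, extFn_indicator T a' u' hu'0 hu'T (l t)]
      by_cases h : u ≤ t
      · have h' : u' ≤ l t := by rw [← hlu]; exact hmono.monotone h
        rw [if_pos h, if_pos h']
        exact le_max_right _ _
      · push_neg at h
        have h' : ¬ (u' ≤ l t) := by
          rw [← hlu]
          exact not_le.mpr (hmono h)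
        rw [if_neg (not_le.mpr h), if_neg h']
        simpa using hr0
  exact csInf_le ⟨0, fun ρ hρ => hρ.1⟩ hmem

/-- Theorem 4.8 (iii): the set of single jumps `{a·1_{[u,T]} : |a| ≤ A, u ∈ [0,T]}`
is relatively `mJ₁`-compact. -/
theorem stmt10 (T : ℝ) (hT : 0 < T) (ε : ℝ) (hε : 0 < ε) (A : ℝ) (hA : 0 < A) :
    ∀ x : ℕ → ℝ → ℝ,
      (∀ n, ∃ a u : ℝ, |a| ≤ A ∧ u ∈ Set.Icc (0:ℝ) T ∧
        x n = (Set.Icc u T).indicator fun _ => a) →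
      ∃ φ : ℕ → ℕ, StrictMono φ ∧ ∃ x₀ : ℝ → ℝ, Cadlag T x₀ ∧
        Filter.Tendsto (fun k => dmJ T ε (x (φ k)) x₀) Filter.atTop (nhds 0) := by
  intro x hx
  choose a u ha hu hxn using hx
  have hcompact : IsCompact ((Set.Icc (-A) A) ×ˢ (Set.Icc (0:ℝ) T)) :=
    isCompact_Icc.prod isCompact_Icc
  have hmem : ∀ n, (a n, u n) ∈ (Set.Icc (-A) A) ×ˢ (Set.Icc (0:ℝ) T) := by
    intro n
    exact Set.mem_prod.mpr ⟨abs_le.mp (ha n), hu n⟩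
  obtain ⟨⟨a₀, u₀⟩, hp₀, φ, hφ, hconv⟩ := hcompact.tendsto_subseq hmem
  have hu₀ : u₀ ∈ Set.Icc (0:ℝ) T := hp₀.2
  have hta : Filter.Tendsto (fun k => a (φ k)) Filter.atTop (nhds a₀) :=
    (continuous_fst.tendsto _).comp hconv
  have htu : Filter.Tendsto (fun k => u (φ k)) Filter.atTop (nhds u₀) :=
    (continuous_snd.tendsto _).comp hconv
  refine ⟨φ, hφ, (Set.Icc u₀ T).indicator fun _ => a₀,
    cadlag_jump T a₀ u₀ hu₀.1 hu₀.2, ?_⟩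
  -- squeeze
  have hupper : Filter.Tendsto
      (fun k => max (max |Real.log ((u₀ + ε) / (u (φ k) + ε))|
        |Real.log ((T + ε - u₀) / (T + ε - u (φ k)))|) |a (φ k) - a₀|)
      Filter.atTop (nhds 0) := by
    have h1 : Filter.Tendsto (fun k => (u₀ + ε) / (u (φ k) + ε))
        Filter.atTop (nhds 1) := by
      have hne : u₀ + ε ≠ 0 := by
        have := hu₀.1; positivity
      have := Filter.Tendsto.div (tendsto_const_nhds : Filter.Tendsto
        (fun _ : ℕ => u₀ + ε) Filter.atTop (nhds (u₀ + ε)))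
        (htu.add tendsto_const_nhds) hne
      simpa [div_self hne, Pi.div_def] using this
    have h2 : Filter.Tendsto (fun k => (T + ε - u₀) / (T + ε - u (φ k)))
        Filter.atTop (nhds 1) := by
      have hne : T + ε - u₀ ≠ 0 := by
        have := hu₀.2; intro h; linarith
      have := Filter.Tendsto.div (tendsto_const_nhds : Filter.Tendsto
        (fun _ : ℕ => T + ε - u₀) Filter.atTop (nhds (T + ε - u₀)))
        (tendsto_const_nhds.sub htu) hne
      simpa [div_self hne, Pi.div_def] using this
    have hlog : ContinuousAt Real.log 1 := Real.continuousAt_log one_ne_zero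
    have hl1 : Filter.Tendsto (fun k => |Real.log ((u₀ + ε) / (u (φ k) + ε))|)
        Filter.atTop (nhds 0) := by
      have := (hlog.tendsto.comp h1).abs
      simpa [Real.log_one] using this
    have hl2 : Filter.Tendsto (fun k => |Real.log ((T + ε - u₀) / (T + ε - u (φ k)))|)
        Filter.atTop (nhds 0) := by
      have := (hlog.tendsto.comp h2).abs
      simpa [Real.log_one] using this
    have hl3 : Filter.Tendsto (fun k => |a (φ k) - a₀|) Filter.atTop (nhds 0) := by
      have := Filter.Tendsto.abs (Filter.Tendsto.sub hta (tendsto_const_nhds :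
        Filter.Tendsto (fun _ : ℕ => a₀) Filter.atTop (nhds a₀)))
      simpa using this
    have := (hl1.max hl2).max hl3
    simpa using this
  apply tendsto_of_tendsto_of_tendsto_of_le_of_le
    (tendsto_const_nhds : Filter.Tendsto (fun _ : ℕ => (0:ℝ)) _ _) hupper
  · intro k
    exact dmJ_nonneg T ε _ _
  · intro k
    simp only [hxn (φ k)]
    exact dmJ_jump_le T ε (a (φ k)) a₀ (u (φ k)) u₀ hT hε (hu (φ k)) hu₀

end
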